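/- arXiv:2312.15312 — 3 statements merged into one kernel-verified Lean document; each statement's English description precedes it below -/
import Mathlib

section
/- Let −φ: ℝᵈ → ℝᵈ be a monotone map with φ(z*) = 0, and let z(t) be a differentiable solution of dz/dt = φ(z). Then the Lyapunov function V(z) = ‖φ(z)‖² + (1/2)‖z − z*‖² is nonincreasing along trajectories provided the Jacobian ∇φ(z) is negative semidefinite (zᵀ∇φ(z)z ≤ 0 for all z) at every point; that is, dV(z(t))/dt ≤ 0. -/
theorem lyapunov_nonincreasing (d : ℕ)
    (φ : EuclideanSpace ℝ (Fin d) → EuclideanSpace ℝ (Fin d))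
    (hφ : ContDiff ℝ 1 φ)
    (zstar : EuclideanSpace ℝ (Fin d))
    (heq : φ zstar = 0)
    (hmono : ∀ x y : EuclideanSpace ℝ (Fin d),
      inner (x - y) (φ x - φ y) (𝕜 := ℝ) ≤ 0)
    (hjac : ∀ x v : EuclideanSpace ℝ (Fin d),
      inner v (fderiv ℝ φ x v) (𝕜 := ℝ) ≤ 0)
    (z : ℝ → EuclideanSpace ℝ (Fin d))
    (hz : ∀ t : ℝ, HasDerivAt z (φ (z t)) t) :
    ∀ (t D : ℝ),
      HasDerivAt (fun s => ‖φ (z s)‖ ^ 2 + (1 / 2) * ‖z s - zstar‖ ^ 2) D t →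
      D ≤ 0 := by
  intro t D hD
  have h1 : HasDerivAt (fun s => φ (z s)) (fderiv ℝ φ (z t) (φ (z t))) t :=
    ((hφ.differentiable one_ne_zero (z t)).hasFDerivAt).comp_hasDerivAt t (hz t)
  have h2 : HasDerivAt (fun s => z s - zstar) (φ (z t)) t := (hz t).sub_const zstar
  have hA : HasDerivAt (fun s => ‖φ (z s)‖ ^ 2)
      (2 * inner (φ (z t)) (fderiv ℝ φ (z t) (φ (z t))) (𝕜 := ℝ)) t := by
    have h := h1.inner ℝ h1
    have hf : (fun s => ‖φ (z s)‖ ^ 2) =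
        fun s => inner (φ (z s)) (φ (z s)) (𝕜 := ℝ) := by
      funext s; exact (real_inner_self_eq_norm_sq _).symm
    rw [hf]
    convert h using 1
    case e'_4 => rfl
    case e'_5 => rfl
    rw [real_inner_comm]; ring
  have hB : HasDerivAt (fun s => (1 / 2 : ℝ) * ‖z s - zstar‖ ^ 2)
      (inner (z t - zstar) (φ (z t)) (𝕜 := ℝ)) t := by
    have h := (h2.inner ℝ h2).const_mul (1 / 2 : ℝ)
    have hf : (fun s => (1 / 2 : ℝ) * ‖z s - zstar‖ ^ 2) =
        fun s => (1 / 2 : ℝ) * inner (z s - zstar) (z s - zstar) (𝕜 := ℝ) := by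
      funext s; rw [real_inner_self_eq_norm_sq]
    rw [hf]
    convert h using 1
    case e'_4 => rfl
    case e'_5 => rfl
    rw [real_inner_comm]; ring
  have huniq := hD.unique (hA.add hB)
  rw [huniq]
  have t1 := hjac (z t) (φ (z t))
  have t2 := hmono (z t) zstar
  rw [heq, sub_zero] at t2
  nlinarith
end

section
/- Fix μ ∈ ℝⁿ, a positive semidefinite matrix Σ ∈ ℝⁿˣⁿ, and ξ, ρ₁, ρ₂ ≥ 0. The function φ(τ, x) = (√(eˣ/(1−eˣ))·√ρ₂ + √ρ₁)·‖Σ^{1/2}τ‖ − τᵀμ + ξ, defined for τ ∈ ℝⁿ and x < 0, is biconvex: for each fixed x < 0 it is convex in τ, and for each fixed τ it is convex in x on (−∞, 0). -/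
open Matrix

/-- The square root of a positive semidefinite matrix, as defined in Mathlib of December 2024
(removed since): `U * diagonal (√ ∘ eigenvalues) * U⋆`. -/
noncomputable def Matrix.PosSemidef.sqrt {n : Type*} [Fintype n] [DecidableEq n] {𝕜 : Type*}
    [RCLike 𝕜] [PartialOrder 𝕜] [StarOrderedRing 𝕜] {A : Matrix n n 𝕜} (hA : PosSemidef A) : Matrix n n 𝕜 :=
  hA.1.eigenvectorUnitary.1 * diagonal ((↑) ∘ (Real.sqrt ∘ hA.1.eigenvalues)) *
  (star hA.1.eigenvectorUnitary : Matrix n n 𝕜)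

noncomputable def phiCC (n : ℕ) (μ : Fin n → ℝ) (Sig : Matrix (Fin n) (Fin n) ℝ)
    (hSig : Sig.PosSemidef) (ξ ρ₁ ρ₂ : ℝ) (τ : Fin n → ℝ) (x : ℝ) : ℝ :=
  (Real.sqrt (Real.exp x / (1 - Real.exp x)) * Real.sqrt ρ₂ + Real.sqrt ρ₁) *
      ‖(WithLp.equiv 2 (Fin n → ℝ)).symm (hSig.sqrt.mulVec τ)‖ - τ ⬝ᵥ μ + ξ

private noncomputable def GCC : ℝ → ℝ :=
  fun x => Real.exp ((x - Real.log (1 - Real.exp x)) / 2)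

private lemma GCC_hasDerivAt {x : ℝ} (hx : x < 0) :
    HasDerivAt GCC (GCC x * (2 * (1 - Real.exp x))⁻¹) x := by
  have h1 : (0:ℝ) < 1 - Real.exp x := by
    have := Real.exp_lt_one_iff.mpr hx; linarith
  have hd1 : HasDerivAt (fun x => 1 - Real.exp x) (-Real.exp x) x := by
    simpa using (Real.hasDerivAt_exp x).const_sub 1
  have hdlog : HasDerivAt (fun x => Real.log (1 - Real.exp x))
      (-Real.exp x / (1 - Real.exp x)) x := hd1.log h1.ne'
  have hdh : HasDerivAt (fun x => (x - Real.log (1 - Real.exp x)) / 2)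
      ((1 - -Real.exp x / (1 - Real.exp x)) / 2) x :=
    ((hasDerivAt_id x).sub hdlog).div_const 2
  have := hdh.exp
  refine this.congr_deriv ?_
  unfold GCC
  congr 1
  field_simp
  ring

private lemma GCC_deriv2 {x : ℝ} (hx : x < 0) :
    HasDerivAt (fun y => GCC y * (2 * (1 - Real.exp y))⁻¹)
      (GCC x * ((2 * (1 - Real.exp x))⁻¹) ^ 2
        + GCC x * (Real.exp x * ((2 * (1 - Real.exp x) ^ 2)⁻¹))) x := by
  have h1 : (0:ℝ) < 1 - Real.exp x := by
    have := Real.exp_lt_one_iff.mpr hx; linarith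
  have hd1 : HasDerivAt (fun x => 2 * (1 - Real.exp x)) (2 * -Real.exp x) x := by
    simpa using ((Real.hasDerivAt_exp x).const_sub 1).const_mul 2
  have hdc : HasDerivAt (fun x => (2 * (1 - Real.exp x))⁻¹)
      (-(2 * -Real.exp x) / (2 * (1 - Real.exp x)) ^ 2) x := by
    exact hd1.inv (by positivity)
  have := (GCC_hasDerivAt hx).mul hdc
  refine this.congr_deriv ?_
  have hG : GCC x > 0 := Real.exp_pos _
  generalize 1 - Real.exp x = u
  ring

private lemma GCC_convex : ConvexOn ℝ (Set.Iio (0:ℝ)) GCC := by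
  have hint : interior (Set.Iio (0:ℝ)) = Set.Iio 0 := interior_Iio
  refine convexOn_of_hasDerivWithinAt2_nonneg (convex_Iio 0)
    (f' := fun x => GCC x * (2 * (1 - Real.exp x))⁻¹)
    (f'' := fun x => GCC x * ((2 * (1 - Real.exp x))⁻¹) ^ 2
        + GCC x * (Real.exp x * ((2 * (1 - Real.exp x) ^ 2)⁻¹)))
    ?_ ?_ ?_ ?_
  · intro x hx
    exact (GCC_hasDerivAt hx).continuousAt.continuousWithinAt
  · intro x hx
    rw [hint] at hx ⊢
    exact (GCC_hasDerivAt hx).hasDerivWithinAt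
  · intro x hx
    rw [hint] at hx ⊢
    exact (GCC_deriv2 hx).hasDerivWithinAt
  · intro x hx
    rw [hint] at hx
    have h1 : (0:ℝ) < 1 - Real.exp x := by
      have := Real.exp_lt_one_iff.mpr hx; linarith
    have hG : (0:ℝ) < GCC x := Real.exp_pos _
    have he : (0:ℝ) < Real.exp x := Real.exp_pos _
    positivity

private lemma sqrt_eq_GCC {x : ℝ} (hx : x < 0) :
    Real.sqrt (Real.exp x / (1 - Real.exp x)) = GCC x := by
  have h1 : (0:ℝ) < 1 - Real.exp x := by
    have := Real.exp_lt_one_iff.mpr hx; linarith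
  have hsq : GCC x ^ 2 = Real.exp x / (1 - Real.exp x) := by
    unfold GCC
    rw [sq, ← Real.exp_add]
    have : (x - Real.log (1 - Real.exp x)) / 2 + (x - Real.log (1 - Real.exp x)) / 2
        = x - Real.log (1 - Real.exp x) := by ring
    rw [this, Real.exp_sub, Real.exp_log h1]
  have : (0:ℝ) ≤ GCC x := (Real.exp_pos _).le
  rw [← hsq, Real.sqrt_sq this]

private lemma gCC_convex : ConvexOn ℝ (Set.Iio (0:ℝ))
    (fun x => Real.sqrt (Real.exp x / (1 - Real.exp x))) :=
  GCC_convex.congr fun _ hx => (sqrt_eq_GCC hx).symm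

private noncomputable def dotL (n : ℕ) (μ : Fin n → ℝ) : (Fin n → ℝ) →ₗ[ℝ] ℝ where
  toFun := fun τ => τ ⬝ᵥ μ
  map_add' := fun a b => add_dotProduct a b μ
  map_smul' := fun c a => smul_dotProduct c a μ

theorem phiCC_biconvex (n : ℕ) (μ : Fin n → ℝ) (Sig : Matrix (Fin n) (Fin n) ℝ)
    (hSig : Sig.PosSemidef) (ξ ρ₁ ρ₂ : ℝ) (hξ : 0 ≤ ξ) (hρ₁ : 0 ≤ ρ₁) (hρ₂ : 0 ≤ ρ₂) :
    (∀ x : ℝ, x < 0 →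
      ConvexOn ℝ Set.univ (fun τ : Fin n → ℝ => phiCC n μ Sig hSig ξ ρ₁ ρ₂ τ x)) ∧
    (∀ τ : Fin n → ℝ,
      ConvexOn ℝ (Set.Iio (0 : ℝ)) (fun x : ℝ => phiCC n μ Sig hSig ξ ρ₁ ρ₂ τ x)) := by
  constructor
  · intro x hx
    set c : ℝ := Real.sqrt (Real.exp x / (1 - Real.exp x)) * Real.sqrt ρ₂ + Real.sqrt ρ₁
      with hc
    have hc0 : 0 ≤ c := by positivity
    set L : (Fin n → ℝ) →ₗ[ℝ] EuclideanSpace ℝ (Fin n) :=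
      (WithLp.linearEquiv 2 ℝ (Fin n → ℝ)).symm.toLinearMap.comp
        (Matrix.mulVecLin hSig.sqrt) with hL
    have h1 : ConvexOn ℝ Set.univ (fun τ : Fin n → ℝ => ‖L τ‖) := by
      have := convexOn_univ_norm (E := EuclideanSpace ℝ (Fin n)) |>.comp_linearMap L
      exact this
    have h2 : ConvexOn ℝ Set.univ (fun τ : Fin n → ℝ => (dotL n (-μ)) τ + ξ) :=
      ((dotL n (-μ)).convexOn convex_univ).add_const ξ
    have := (h1.smul hc0).add h2
    refine this.congr fun τ _ => ?_
    show c • ‖L τ‖ + ((dotL n (-μ)) τ + ξ) = _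
    unfold phiCC
    rw [smul_eq_mul]
    have hLτ : L τ = (WithLp.equiv 2 (Fin n → ℝ)).symm (hSig.sqrt.mulVec τ) := rfl
    have hdot : (dotL n (-μ)) τ = -(τ ⬝ᵥ μ) := by
      show τ ⬝ᵥ (-μ) = -(τ ⬝ᵥ μ)
      simp
    rw [hLτ, hdot, ← hc]
    ring
  · intro τ
    set K : ℝ := ‖(WithLp.equiv 2 (Fin n → ℝ)).symm (hSig.sqrt.mulVec τ)‖ with hK
    have hK0 : 0 ≤ K := norm_nonneg _
    have hcoef : 0 ≤ Real.sqrt ρ₂ * K := by positivity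
    have := (gCC_convex.smul hcoef).add_const (Real.sqrt ρ₁ * K - τ ⬝ᵥ μ + ξ)
    refine this.congr fun x _ => ?_
    show (Real.sqrt ρ₂ * K) • Real.sqrt (Real.exp x / (1 - Real.exp x))
        + (Real.sqrt ρ₁ * K - τ ⬝ᵥ μ + ξ) = _
    unfold phiCC
    rw [smul_eq_mul, ← hK]
    ring
end

section
/- Let z(t) solve the autonomous ODE dz/dt = φ(z) where φ is continuously differentiable and its Jacobian is everywhere negative semidefinite (quadratic-form sense). If z* is an equilibrium (φ(z*)=0) and V(z) = ‖φ(z)‖² + (1/2)‖z − z*‖², then for any trajectory, V(z(t)) ≥ (1/2)‖z(t) − z*‖², so trajectories remain bounded: ‖z(t) − z*‖ ≤ √(2V(z(0))) for all t ≥ 0. -/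
open scoped RealInnerProductSpace

theorem trajectories_bounded (d : ℕ)
    (φ : EuclideanSpace ℝ (Fin d) → EuclideanSpace ℝ (Fin d))
    (hφ : ContDiff ℝ 1 φ)
    (hjac : ∀ x v : EuclideanSpace ℝ (Fin d),
      inner v (fderiv ℝ φ x v) (𝕜 := ℝ) ≤ 0)
    (zstar : EuclideanSpace ℝ (Fin d)) (heq : φ zstar = 0)
    (z : ℝ → EuclideanSpace ℝ (Fin d))
    (hz : ∀ t : ℝ, HasDerivAt z (φ (z t)) t) :
    (∀ t : ℝ, (1 / 2) * ‖z t - zstar‖ ^ 2 ≤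
        ‖φ (z t)‖ ^ 2 + (1 / 2) * ‖z t - zstar‖ ^ 2) ∧
    (∀ t : ℝ, 0 ≤ t →
      ‖z t - zstar‖ ≤ Real.sqrt (2 * (‖φ (z 0)‖ ^ 2 + (1 / 2) * ‖z 0 - zstar‖ ^ 2))) := by
  have hdiff : Differentiable ℝ φ := hφ.differentiable one_ne_zero
  have hdφ : ∀ x, HasFDerivAt φ (fderiv ℝ φ x) x := fun x => (hdiff x).hasFDerivAt
  -- monotonicity: ⟪x - zstar, φ x⟫ ≤ 0
  have hmono : ∀ x : EuclideanSpace ℝ (Fin d), ⟪x - zstar, φ x⟫ ≤ 0 := by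
    intro x
    set g : ℝ → ℝ := fun s => ⟪x - zstar, φ (zstar + s • (x - zstar))⟫ with hg
    have hpath : ∀ s : ℝ, HasDerivAt (fun s : ℝ => zstar + s • (x - zstar)) (x - zstar) s := by
      intro s
      simpa using ((hasDerivAt_id s).smul_const (x - zstar)).const_add zstar
    have hg' : ∀ s : ℝ, HasDerivAt g
        ⟪x - zstar, fderiv ℝ φ (zstar + s • (x - zstar)) (x - zstar)⟫ s := by
      intro s
      have h1 : HasDerivAt (fun s : ℝ => φ (zstar + s • (x - zstar)))
          (fderiv ℝ φ (zstar + s • (x - zstar)) (x - zstar)) s :=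
        (hdφ _).comp_hasDerivAt s (hpath s)
      have := (hasDerivAt_const s (x - zstar)).inner ℝ h1
      simpa using this
    have hanti : Antitone g := by
      refine antitone_of_deriv_nonpos (fun s => (hg' s).differentiableAt) (fun s => ?_)
      rw [(hg' s).deriv]
      exact hjac _ _
    have h10 : g 1 ≤ g 0 := hanti zero_le_one
    simpa [hg, heq] using h10
  -- Lyapunov function
  set W : ℝ → ℝ := fun t => ⟪φ (z t), φ (z t)⟫ + (1 / 2) * ⟪z t - zstar, z t - zstar⟫ with hW
  have hφz : ∀ t : ℝ, HasDerivAt (fun t => φ (z t)) (fderiv ℝ φ (z t) (φ (z t))) t :=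
    fun t => (hdφ (z t)).comp_hasDerivAt t (hz t)
  have hzs : ∀ t : ℝ, HasDerivAt (fun t => z t - zstar) (φ (z t)) t :=
    fun t => (hz t).sub_const zstar
  have hW' : ∀ t : ℝ, HasDerivAt W
      ((⟪φ (z t), fderiv ℝ φ (z t) (φ (z t))⟫ + ⟪fderiv ℝ φ (z t) (φ (z t)), φ (z t)⟫)
        + (1 / 2) * (⟪z t - zstar, φ (z t)⟫ + ⟪φ (z t), z t - zstar⟫)) t := by
    intro t
    exact ((hφz t).inner ℝ (hφz t)).add (((hzs t).inner ℝ (hzs t)).const_mul (1 / 2))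
  have hWanti : Antitone W := by
    refine antitone_of_deriv_nonpos (fun t => (hW' t).differentiableAt) (fun t => ?_)
    rw [(hW' t).deriv]
    have h1 : ⟪φ (z t), fderiv ℝ φ (z t) (φ (z t))⟫ ≤ 0 := hjac _ _
    have h2 : ⟪fderiv ℝ φ (z t) (φ (z t)), φ (z t)⟫ ≤ 0 := by
      rwa [real_inner_comm]
    have h3 : ⟪z t - zstar, φ (z t)⟫ ≤ 0 := hmono _
    have h4 : ⟪φ (z t), z t - zstar⟫ ≤ 0 := by rwa [real_inner_comm]
    nlinarith
  have hWnorm : ∀ t, W t = ‖φ (z t)‖ ^ 2 + (1 / 2) * ‖z t - zstar‖ ^ 2 := by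
    intro t; simp only [hW]; rw [real_inner_self_eq_norm_sq, real_inner_self_eq_norm_sq]
  constructor
  · intro t
    have : (0:ℝ) ≤ ‖φ (z t)‖ ^ 2 := sq_nonneg _
    linarith
  · intro t ht
    have hle : W t ≤ W 0 := hWanti ht
    rw [hWnorm, hWnorm] at hle
    have h0 : (0:ℝ) ≤ ‖z t - zstar‖ := norm_nonneg _
    have hy : (0:ℝ) ≤ 2 * (‖φ (z 0)‖ ^ 2 + (1 / 2) * ‖z 0 - zstar‖ ^ 2) := by positivity
    rw [Real.le_sqrt h0 hy]
    nlinarith [sq_nonneg ‖φ (z t)‖]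
end
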